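/- Let z, θ : ℝ → ℝ be differentiable with z(s) > 0, satisfying θ' = 2 + cos(θ)/z and z' = sin(θ). Then the function s ↦ z(s)(cos θ(s) + z(s)) is constant. -/

import Mathlib

open Real

/-- For the Delaunay ODE `θ' = 2 + cos θ / z`, `z' = sin θ` with `z > 0`,
the quantity `z (cos θ + z)` is constant. -/
theorem delaunay_first_integral (z θ : ℝ → ℝ)
    (hzpos : ∀ s, 0 < z s)
    (hθ : ∀ s, HasDerivAt θ (2 + Real.cos (θ s) / z s) s)
    (hz : ∀ s, HasDerivAt z (Real.sin (θ s)) s) :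
    ∀ s t, z s * (Real.cos (θ s) + z s) = z t * (Real.cos (θ t) + z t) := by
  have key : ∀ s, HasDerivAt (fun s => z s * (Real.cos (θ s) + z s)) 0 s := by
    intro s
    have hc : HasDerivAt (fun s => Real.cos (θ s))
        (-Real.sin (θ s) * (2 + Real.cos (θ s) / z s)) s :=
      (Real.hasDerivAt_cos (θ s)).comp s (hθ s)
    have h : HasDerivAt (fun s => z s * (Real.cos (θ s) + z s))
        (Real.sin (θ s) * (Real.cos (θ s) + z s) +
          z s * (-Real.sin (θ s) * (2 + Real.cos (θ s) / z s) + Real.sin (θ s))) s :=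
      (hz s).mul (hc.add (hz s))
    convert h using 1
    have hzne := (hzpos s).ne'
    field_simp
    ring
  intro s t
  have := is_const_of_deriv_eq_zero (f := fun s => z s * (Real.cos (θ s) + z s))
    (fun x => (key x).differentiableAt) (fun x => (key x).deriv) s t
  simpa using this
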